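/- Let S² = {(x,y,z) ∈ ℝ³ : x² + y² + z² = 1} and let p : S² → M₂(ℂ) be the Bott projection, p(x,y,z) = (1/2)·[[1+x, y−iz],[y+iz, 1−x]]. Then the vector bundle ξ_p admits no nowhere-zero continuous section: for every continuous map s : S² → ℂ² satisfying p(v)s(v) = s(v) for all v ∈ S², there exists v ∈ S² with s(v) = 0. Equivalently, e₁₁ ⋠ p in M₂(C(S²)). -/

import Mathlib

open Matrix ComplexOrder

/-- The 2-sphere `S² = {(x,y,z) ∈ ℝ³ : x² + y² + z² = 1}`. -/
abbrev TwoSphere : Type := {v : Fin 3 → ℝ // v 0 ^ 2 + v 1 ^ 2 + v 2 ^ 2 = 1}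

/-- The Bott projection `p(x,y,z) = (1/2)·[[1+x, y−iz],[y+iz, 1−x]]`. -/
noncomputable def bottProjection (v : TwoSphere) : Matrix (Fin 2) (Fin 2) ℂ :=
  (2 : ℂ)⁻¹ • !![1 + (v.1 0 : ℂ), (v.1 1 : ℂ) - Complex.I * (v.1 2 : ℂ);
                 (v.1 1 : ℂ) + Complex.I * (v.1 2 : ℂ), 1 - (v.1 0 : ℂ)]

open Set Real

private lemma ball_subset_slit {z : ℂ} (hz : z ∈ Metric.ball (1 : ℂ) 1) :
    z ∈ Complex.slitPlane := by
  rw [Complex.mem_slitPlane_iff]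
  left
  have h : ‖z - 1‖ < 1 := by simpa [dist_eq_norm] using hz
  have h2 : |(z - 1).re| ≤ ‖z - 1‖ := by
    simpa using Complex.abs_re_le_norm (z - 1)
  simp only [Complex.sub_re, Complex.one_re] at h2
  have := abs_lt.mp (lt_of_le_of_lt h2 h)
  linarith [this.1]

/-- A continuous function on `[a,b]` whose exponential is constantly `1`
takes the same value at the endpoints. -/
private lemma exp_one_const {g : ℝ → ℂ} {a b : ℝ} (hab : a ≤ b)
    (hg : ContinuousOn g (Icc a b)) (h1 : ∀ t ∈ Icc a b, Complex.exp (g t) = 1) :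
    g b = g a := by
  have key : ∀ t ∈ Icc a b, ∃ n : ℤ, g t = (n : ℂ) * (2 * (π : ℂ) * Complex.I) :=
    fun t ht => Complex.exp_eq_one_iff.mp (h1 t ht)
  have him : ∀ t ∈ Icc a b, ∃ n : ℤ, (g t).im = (n : ℝ) * (2 * π) := by
    intro t ht
    obtain ⟨n, hn⟩ := key t ht
    refine ⟨n, ?_⟩
    rw [hn]
    simp [Complex.mul_im, Complex.mul_re]
  have hre : ∀ t ∈ Icc a b, (g t).re = 0 := by
    intro t ht
    obtain ⟨n, hn⟩ := key t ht
    rw [hn]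
    simp [Complex.mul_re, Complex.mul_im]
  have hucont : ContinuousOn (fun t => (g t).im) (Icc a b) :=
    Complex.continuous_im.comp_continuousOn hg
  have hmema : a ∈ Icc a b := left_mem_Icc.mpr hab
  have hmemb : b ∈ Icc a b := right_mem_Icc.mpr hab
  obtain ⟨m, hm⟩ := him a hmema
  obtain ⟨m', hm'⟩ := him b hmemb
  have hπ : (0:ℝ) < π := Real.pi_pos
  have hub : (g b).im = (g a).im := by
    rcases lt_trichotomy ((g a).im) ((g b).im) with hlt | heq | hgt
    · exfalso
      have hmm : m < m' := by
        by_contra hc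
        push_neg at hc
        have : (m' : ℝ) ≤ (m : ℝ) := by exact_mod_cast hc
        nlinarith [hm, hm']
      have hy : (m : ℝ) * (2 * π) + π ∈ Icc ((g a).im) ((g b).im) := by
        constructor
        · rw [hm]; linarith
        · rw [hm']
          have : (m : ℝ) + 1 ≤ (m' : ℝ) := by exact_mod_cast hmm
          nlinarith
      obtain ⟨t, ht, hgt⟩ := intermediate_value_Icc hab hucont hy
      obtain ⟨n, hn⟩ := him t ht
      have hgt2 : (n : ℝ) * (2 * π) = (m : ℝ) * (2 * π) + π := by rw [← hn]; exact hgt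
      have h2 : (2 * n : ℤ) = 2 * m + 1 := by
        have : ((2 * n : ℤ) : ℝ) = ((2 * m + 1 : ℤ) : ℝ) := by push_cast; nlinarith
        exact_mod_cast this
      omega
    · exact heq.symm
    · exfalso
      have hmm : m' < m := by
        by_contra hc
        push_neg at hc
        have : (m : ℝ) ≤ (m' : ℝ) := by exact_mod_cast hc
        nlinarith [hm, hm']
      have hy : (m' : ℝ) * (2 * π) + π ∈ Icc ((g b).im) ((g a).im) := by
        constructor
        · rw [hm']; linarith
        · rw [hm]
          have : (m' : ℝ) + 1 ≤ (m : ℝ) := by exact_mod_cast hmm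
          nlinarith
      obtain ⟨t, ht, hgt⟩ := intermediate_value_Icc' hab hucont hy
      obtain ⟨n, hn⟩ := him t ht
      have hgt2 : (n : ℝ) * (2 * π) = (m' : ℝ) * (2 * π) + π := by rw [← hn]; exact hgt
      have h2 : (2 * n : ℤ) = 2 * m' + 1 := by
        have : ((2 * n : ℤ) : ℝ) = ((2 * m' + 1 : ℤ) : ℝ) := by push_cast; nlinarith
        exact_mod_cast this
      omega
  exact Complex.ext (by rw [hre b hmemb, hre a hmema]) hub

/-- Logarithm lifting on a rectangle, given a lift along the bottom edge. -/
private lemma liftRect (G : ℝ × ℝ → ℂ) (hG : Continuous G) (h0 : ∀ p, G p ≠ 0)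
    (a₁ b₁ a₂ b₂ : ℝ) (h1 : a₁ ≤ b₁) (h2 : a₂ ≤ b₂)
    (B : ℝ → ℂ) (hB : ContinuousOn B (Icc a₁ b₁))
    (hBe : ∀ r ∈ Icc a₁ b₁, Complex.exp (B r) = G (r, a₂)) :
    ∃ L : ℝ × ℝ → ℂ, ContinuousOn L (Icc a₁ b₁ ×ˢ (univ : Set ℝ)) ∧
      ∀ r ∈ Icc a₁ b₁, ∀ θ ∈ Icc a₂ b₂, Complex.exp (L (r, θ)) = G (r, θ) := by
  classical
  set K : Set (ℝ × ℝ) := Icc a₁ b₁ ×ˢ Icc a₂ b₂ with hKdef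
  have hKc : IsCompact K := isCompact_Icc.prod isCompact_Icc
  have hKne : K.Nonempty := ⟨(a₁, a₂), by
    simp [hKdef, Set.mem_prod, left_mem_Icc, h1, h2]⟩
  obtain ⟨p₀, hp₀K, hp₀min⟩ := hKc.exists_isMinOn hKne (continuous_norm.comp hG).continuousOn
  have hp₀ : ∀ q ∈ K, ‖G p₀‖ ≤ ‖G q‖ := fun q hq => isMinOn_iff.mp hp₀min q hq
  set ε := ‖G p₀‖ with hεdef
  have hεpos : 0 < ε := norm_pos_iff.mpr (h0 p₀)
  obtain ⟨δ, hδpos, hδ⟩ := Metric.uniformContinuousOn_iff.mp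
    (hKc.uniformContinuousOn_of_continuous hG.continuousOn) ε hεpos
  obtain ⟨n₀, hn₀⟩ := exists_nat_gt ((b₂ - a₂) / δ)
  set m : ℕ := n₀ + 1 with hmdef
  have hmpos : (0:ℝ) < (m:ℝ) := by positivity
  set dθ : ℝ := (b₂ - a₂) / m with hdθdef
  have hdθ0 : 0 ≤ dθ := div_nonneg (by linarith) (le_of_lt hmpos)
  have hdθδ : dθ < δ := by
    rw [hdθdef, div_lt_iff₀ hmpos]
    have h3 : (b₂ - a₂) / δ < (m:ℝ) := lt_of_lt_of_le hn₀ (by exact_mod_cast Nat.le_succ n₀)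
    calc b₂ - a₂ = ((b₂ - a₂) / δ) * δ := by field_simp
    _ < (m:ℝ) * δ := by exact mul_lt_mul_of_pos_right h3 hδpos
    _ = δ * m := by ring
  set tk : ℕ → ℝ := fun k => a₂ + k * dθ with htkdef
  have htk_mono : ∀ k, tk k ≤ tk (k+1) := by
    intro k
    simp only [htkdef]
    push_cast
    nlinarith
  have htk_mem : ∀ k, k ≤ m → tk k ∈ Icc a₂ b₂ := by
    intro k hk
    have hk' : (k:ℝ) ≤ (m:ℝ) := by exact_mod_cast hk
    have hk0 : (0:ℝ) ≤ (k:ℝ) := Nat.cast_nonneg k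
    constructor
    · simp only [htkdef]; nlinarith
    · simp only [htkdef]
      have : (m:ℝ) * dθ = b₂ - a₂ := by
        rw [hdθdef]; field_simp
      nlinarith
  set cl : ℕ → ℝ → ℝ := fun k θ => max (tk k) (min θ (tk (k+1))) with hcldef
  have hcl_mem : ∀ k θ, cl k θ ∈ Icc (tk k) (tk (k+1)) :=
    fun k θ => ⟨le_max_left _ _, max_le (htk_mono k) (min_le_right _ _)⟩
  have hcl_close : ∀ k θ, |cl k θ - tk k| ≤ dθ := by
    intro k θ
    have h := hcl_mem k θ
    rw [abs_le]
    constructor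
    · linarith [h.1]
    · have : tk (k+1) - tk k = dθ := by simp only [htkdef]; push_cast; ring
      linarith [h.2]
  have hratio : ∀ r ∈ Icc a₁ b₁, ∀ k, k < m → ∀ θ : ℝ,
      G (r, cl k θ) / G (r, tk k) ∈ Metric.ball (1 : ℂ) 1 := by
    intro r hr k hk θ
    have hk1 : k + 1 ≤ m := hk
    have hclK : (r, cl k θ) ∈ K := by
      refine ⟨hr, ?_⟩
      have h := hcl_mem k θ
      exact ⟨le_trans (htk_mem k (le_of_lt hk)).1 h.1,
        le_trans h.2 (htk_mem (k+1) hk1).2⟩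
    have htkK : (r, tk k) ∈ K := ⟨hr, htk_mem k (le_of_lt hk)⟩
    have hdist : dist ((r, cl k θ) : ℝ × ℝ) (r, tk k) < δ := by
      rw [Prod.dist_eq]
      simp only [dist_self]
      have : dist (cl k θ) (tk k) < δ := by
        rw [Real.dist_eq]
        exact lt_of_le_of_lt (hcl_close k θ) hdθδ
      exact max_lt (by linarith [hδpos]) this
    have hGd : ‖G (r, cl k θ) - G (r, tk k)‖ < ε := by
      have := hδ _ hclK _ htkK hdist
      rwa [dist_eq_norm] at this
    have hden : ε ≤ ‖G (r, tk k)‖ := hp₀ _ htkK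
    have hdenpos : 0 < ‖G (r, tk k)‖ := lt_of_lt_of_le hεpos hden
    rw [Metric.mem_ball, dist_eq_norm]
    have heq : G (r, cl k θ) / G (r, tk k) - 1 =
        (G (r, cl k θ) - G (r, tk k)) / G (r, tk k) := by
      rw [sub_div, div_self (h0 _)]
    rw [heq, norm_div, div_lt_one hdenpos]
    exact lt_of_lt_of_le hGd hden
  set L : ℝ × ℝ → ℂ := fun p =>
    B p.1 + ∑ k ∈ Finset.range m, Complex.log (G (p.1, cl k p.2) / G (p.1, tk k)) with hLdef
  refine ⟨L, ?_, ?_⟩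
  · apply ContinuousOn.add
    · exact hB.comp continuousOn_fst (fun p hp => hp.1)
    · apply continuousOn_finset_sum
      intro k hk
      have hk' : k < m := Finset.mem_range.mp hk
      apply ContinuousOn.clog
      · apply Continuous.continuousOn
        apply Continuous.div
        · exact hG.comp (continuous_fst.prodMk
            (continuous_const.max (continuous_snd.min continuous_const)))
        · exact hG.comp (continuous_fst.prodMk continuous_const)
        · intro p; exact h0 _
      · intro p hp
        exact ball_subset_slit (hratio p.1 hp.1 k hk' p.2)
  · intro r hr θ hθ
    have main : ∀ j, j ≤ m →
        Complex.exp (∑ k ∈ Finset.range j, Complex.log (G (r, cl k θ) / G (r, tk k)))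
          = G (r, min θ (tk j)) / G (r, a₂) := by
      intro j
      induction j with
      | zero =>
        intro _
        simp only [Finset.range_zero, Finset.sum_empty, Complex.exp_zero]
        have : min θ (tk 0) = a₂ := by
          have : tk 0 = a₂ := by simp [htkdef]
          rw [this, min_eq_right hθ.1]
        rw [this, div_self (h0 _)]
      | succ j ih =>
        intro hj
        have hj' : j ≤ m := le_trans (Nat.le_succ j) hj
        rw [Finset.sum_range_succ, Complex.exp_add, ih hj',
          Complex.exp_log (div_ne_zero (h0 _) (h0 _))]
        rcases le_total θ (tk j) with hc | hc
        · have e1 : min θ (tk j) = θ := min_eq_left hc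
          have e2 : min θ (tk (j+1)) = θ := min_eq_left (le_trans hc (htk_mono j))
          have e3 : cl j θ = tk j := by
            simp only [hcldef]
            rw [e2, max_eq_left hc]
          rw [e1, e2, e3, div_self (h0 _), mul_one]
        · have e1 : min θ (tk j) = tk j := min_eq_right hc
          have e2 : cl j θ = min θ (tk (j+1)) := by
            simp only [hcldef]
            exact max_eq_right (le_min hc (htk_mono j))
          rw [e1, e2, div_mul_div_cancel₀' (h0 (r, tk j))]
    have hfin : min θ (tk m) = θ := by
      have : tk m = b₂ := by
        simp only [htkdef, hdθdef]
        field_simp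
        ring
      rw [this]
      exact min_eq_left hθ.2
    simp only [hLdef, Complex.exp_add, hBe r hr, main m le_rfl, hfin]
    exact mul_div_cancel₀ _ (h0 _)

/-- 1-dimensional logarithm lifting on a segment. -/
private lemma lift1D (f : ℝ → ℂ) (hf : Continuous f) (h0 : ∀ t, f t ≠ 0)
    (a b : ℝ) (hab : a ≤ b) :
    ∃ l : ℝ → ℂ, ContinuousOn l (Icc a b) ∧ ∀ t ∈ Icc a b, Complex.exp (l t) = f t := by
  obtain ⟨L, hL, hLe⟩ := liftRect (fun p => f p.2) (hf.comp continuous_snd) (fun p => h0 p.2)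
    0 0 a b le_rfl hab (fun _ => Complex.log (f a)) continuousOn_const
    (fun r _ => Complex.exp_log (h0 a))
  refine ⟨fun t => L (0, t), ?_, fun t ht => hLe 0 (by simp) t ht⟩
  exact hL.comp (continuous_const.prodMk continuous_id).continuousOn
    (fun t _ => ⟨by simp, mem_univ t⟩)

private lemma no_section : ∀ s : TwoSphere → Fin 2 → ℂ, Continuous s →
    (∀ v, bottProjection v *ᵥ s v = s v) → ∃ v, s v = 0 := by
  intro s hs hsec
  by_contra hcon
  push_neg at hcon
  -- entrywise identities from the section equation
  have ent : ∀ v : TwoSphere,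
      (1 - (v.1 0 : ℂ)) * s v 0 = ((v.1 1 : ℂ) - Complex.I * (v.1 2 : ℂ)) * s v 1 ∧
      (1 + (v.1 0 : ℂ)) * s v 1 = ((v.1 1 : ℂ) + Complex.I * (v.1 2 : ℂ)) * s v 0 := by
    intro v
    have h := hsec v
    have h0 := congrFun h 0
    have h1 := congrFun h 1
    simp [bottProjection, Matrix.mulVec, dotProduct, Fin.sum_univ_two] at h0 h1
    constructor
    · linear_combination (-2 : ℂ) * h0
    · linear_combination (-2 : ℂ) * h1
  have hnz0 : ∀ v : TwoSphere, 0 ≤ v.1 0 → s v 0 ≠ 0 := by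
    intro v hx h00
    have h2 := (ent v).2
    rw [h00, mul_zero] at h2
    have hx1 : (1 + (v.1 0 : ℂ)) ≠ 0 := by
      have : ((1 + v.1 0 : ℝ) : ℂ) ≠ 0 := Complex.ofReal_ne_zero.mpr (by linarith)
      simpa using this
    have h3 : s v 1 = 0 := (mul_eq_zero.mp h2).resolve_left hx1
    exact hcon v (funext fun i => by fin_cases i <;> simp [h00, h3])
  have hnz1 : ∀ v : TwoSphere, v.1 0 ≤ 0 → s v 1 ≠ 0 := by
    intro v hx h11
    have h2 := (ent v).1
    rw [h11, mul_zero] at h2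
    have hx1 : (1 - (v.1 0 : ℂ)) ≠ 0 := by
      have : ((1 - v.1 0 : ℝ) : ℂ) ≠ 0 := Complex.ofReal_ne_zero.mpr (by linarith)
      simpa using this
    have h3 : s v 0 = 0 := (mul_eq_zero.mp h2).resolve_left hx1
    exact hcon v (funext fun i => by fin_cases i <;> simp [h11, h3])
  have hπ : (0:ℝ) < π := Real.pi_pos
  set c : ℝ → ℝ := fun r => min (max r 0) (π/2) with hcdef
  have hc_mem : ∀ r, c r ∈ Icc 0 (π/2) :=
    fun r => ⟨le_min (le_max_right r 0) (by positivity), min_le_right _ _⟩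
  have hc_cont : Continuous c := (continuous_id.max continuous_const).min continuous_const
  have hc0 : c 0 = 0 := by simp [hcdef]; positivity
  have hcpi : c (π/2) = π/2 := by
    have h1 : max (π/2) (0:ℝ) = π/2 := max_eq_left (by positivity)
    simp only [hcdef, h1, min_self]
  have sph : ∀ x y : ℝ,
      Real.cos x ^ 2 + (Real.sin x * Real.cos y) ^ 2 + (Real.sin x * Real.sin y) ^ 2 = 1 := by
    intro x y
    have h1 := Real.sin_sq_add_cos_sq x
    have h2 := Real.sin_sq_add_cos_sq y
    nlinarith
  set H : ℝ × ℝ → TwoSphere := fun p =>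
    ⟨![Real.cos (c p.1), Real.sin (c p.1) * Real.cos p.2, Real.sin (c p.1) * Real.sin p.2],
      by simp [Matrix.cons_val_zero, Matrix.cons_val_one]; exact sph _ _⟩ with hHdef
  set Km : ℝ × ℝ → TwoSphere := fun p =>
    ⟨![-Real.cos (c p.1), Real.sin (c p.1) * Real.cos p.2, Real.sin (c p.1) * Real.sin p.2],
      by simp [Matrix.cons_val_zero, Matrix.cons_val_one]; exact sph _ _⟩
    with hKmdef
  have hHcont : Continuous H := by
    apply Continuous.subtype_mk
    refine continuous_pi fun i => ?_
    fin_cases i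
    · simp; exact Real.continuous_cos.comp (hc_cont.comp continuous_fst)
    · simp; exact (Real.continuous_sin.comp (hc_cont.comp continuous_fst)).mul
        (Real.continuous_cos.comp continuous_snd)
    · simp; exact (Real.continuous_sin.comp (hc_cont.comp continuous_fst)).mul
        (Real.continuous_sin.comp continuous_snd)
  have hKmcont : Continuous Km := by
    apply Continuous.subtype_mk
    refine continuous_pi fun i => ?_
    fin_cases i
    · simp; exact (Real.continuous_cos.comp (hc_cont.comp continuous_fst)).neg
    · simp; exact (Real.continuous_sin.comp (hc_cont.comp continuous_fst)).mul
        (Real.continuous_cos.comp continuous_snd)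
    · simp; exact (Real.continuous_sin.comp (hc_cont.comp continuous_fst)).mul
        (Real.continuous_sin.comp continuous_snd)
  set G0 : ℝ × ℝ → ℂ := fun p => s (H p) 0 with hG0def
  set G1 : ℝ × ℝ → ℂ := fun p => s (Km p) 1 with hG1def
  have hG0cont : Continuous G0 := (continuous_apply (0 : Fin 2)).comp (hs.comp hHcont)
  have hG1cont : Continuous G1 := (continuous_apply (1 : Fin 2)).comp (hs.comp hKmcont)
  have hG0ne : ∀ p, G0 p ≠ 0 := by
    intro p
    apply hnz0
    show 0 ≤ Real.cos (c p.1)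
    apply Real.cos_nonneg_of_mem_Icc
    have := hc_mem p.1
    constructor <;> [linarith [this.1]; exact this.2]
  have hG1ne : ∀ p, G1 p ≠ 0 := by
    intro p
    apply hnz1
    show -Real.cos (c p.1) ≤ 0
    have : 0 ≤ Real.cos (c p.1) := by
      apply Real.cos_nonneg_of_mem_Icc
      have := hc_mem p.1
      constructor <;> [linarith [this.1]; exact this.2]
    linarith
  have hpi2 : (0:ℝ) ≤ π/2 := by positivity
  have h2pi : (0:ℝ) ≤ 2*π := by positivity
  obtain ⟨B0, hB0cont, hB0e⟩ := lift1D (fun r => G0 (r, 0)) (hG0cont.comp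
    (continuous_id.prodMk continuous_const)) (fun r => hG0ne _) 0 (π/2) hpi2
  obtain ⟨B1, hB1cont, hB1e⟩ := lift1D (fun r => G1 (r, 0)) (hG1cont.comp
    (continuous_id.prodMk continuous_const)) (fun r => hG1ne _) 0 (π/2) hpi2
  obtain ⟨L0, hL0cont, hL0e⟩ := liftRect G0 hG0cont hG0ne 0 (π/2) 0 (2*π) hpi2 h2pi
    B0 hB0cont hB0e
  obtain ⟨L1, hL1cont, hL1e⟩ := liftRect G1 hG1cont hG1ne 0 (π/2) 0 (2*π) hpi2 h2pi
    B1 hB1cont hB1e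
  -- periodicity
  have hHper : ∀ r, H (r, 2*π) = H (r, 0) := by
    intro r
    apply Subtype.ext
    funext i
    fin_cases i <;> simp [hHdef, Real.cos_two_pi, Real.sin_two_pi]
  have hKmper : ∀ r, Km (r, 2*π) = Km (r, 0) := by
    intro r
    apply Subtype.ext
    funext i
    fin_cases i <;> simp [hKmdef, Real.cos_two_pi, Real.sin_two_pi]
  have hHpole : ∀ θ : ℝ, H (0, θ) = H (0, 0) := by
    intro θ
    apply Subtype.ext
    funext i
    fin_cases i <;> simp [hHdef, hc0]
  have hKmpole : ∀ θ : ℝ, Km (0, θ) = Km (0, 0) := by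
    intro θ
    apply Subtype.ext
    funext i
    fin_cases i <;> simp [hKmdef, hc0]
  have hequator : ∀ θ : ℝ, Km (π/2, θ) = H (π/2, θ) := by
    intro θ
    apply Subtype.ext
    funext i
    fin_cases i <;> simp [hHdef, hKmdef, hcpi, Real.cos_pi_div_two]
  -- membership facts
  have hrmem : ∀ r ∈ Icc (0:ℝ) (π/2), (r, (2*π:ℝ)) ∈ Icc (0:ℝ) (π/2) ×ˢ (univ : Set ℝ) ∧
      (r, (0:ℝ)) ∈ Icc (0:ℝ) (π/2) ×ˢ (univ : Set ℝ) :=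
    fun r hr => ⟨⟨hr, mem_univ _⟩, ⟨hr, mem_univ _⟩⟩
  have hpimem : (π/2) ∈ Icc (0:ℝ) (π/2) := ⟨hpi2, le_rfl⟩
  have h0mem : (0:ℝ) ∈ Icc (0:ℝ) (π/2) := ⟨le_rfl, hpi2⟩
  have h2pimem : (2*π) ∈ Icc (0:ℝ) (2*π) := ⟨h2pi, le_rfl⟩
  have h02mem : (0:ℝ) ∈ Icc (0:ℝ) (2*π) := ⟨le_rfl, h2pi⟩
  -- winding numbers vanish: d_i (π/2) = d_i 0 = 0
  have wind : ∀ (L : ℝ × ℝ → ℂ) (G : ℝ × ℝ → ℂ),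
      ContinuousOn L (Icc (0:ℝ) (π/2) ×ˢ (univ : Set ℝ)) →
      (∀ r ∈ Icc (0:ℝ) (π/2), ∀ θ ∈ Icc (0:ℝ) (2*π), Complex.exp (L (r, θ)) = G (r, θ)) →
      (∀ p, G p ≠ 0) →
      (∀ r, G (r, 2*π) = G (r, 0)) →
      (∀ θ, G (0, θ) = G (0, 0)) →
      L (π/2, 2*π) = L (π/2, 0) := by
    intro L G hLc hLe hGne hGper hGpole
    set d : ℝ → ℂ := fun r => L (r, 2*π) - L (r, 0) with hddef
    have hdc : ContinuousOn d (Icc 0 (π/2)) := by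
      apply ContinuousOn.sub
      · exact hLc.comp (continuous_id.prodMk continuous_const).continuousOn
          (fun r hr => ⟨hr, mem_univ _⟩)
      · exact hLc.comp (continuous_id.prodMk continuous_const).continuousOn
          (fun r hr => ⟨hr, mem_univ _⟩)
    have hde : ∀ r ∈ Icc (0:ℝ) (π/2), Complex.exp (d r) = 1 := by
      intro r hr
      rw [hddef]
      simp only
      rw [Complex.exp_sub, hLe r hr _ h2pimem, hLe r hr _ h02mem, hGper r,
        div_self (hGne _)]
    have hd0 : d 0 = 0 := by
      set g : ℝ → ℂ := fun θ => L (0, θ) - L (0, 0) with hgdef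
      have hgc : ContinuousOn g (Icc 0 (2*π)) := by
        apply ContinuousOn.sub
        · exact hLc.comp (continuous_const.prodMk continuous_id).continuousOn
            (fun θ _ => ⟨h0mem, mem_univ _⟩)
        · exact continuousOn_const
      have hge : ∀ θ ∈ Icc (0:ℝ) (2*π), Complex.exp (g θ) = 1 := by
        intro θ hθ
        rw [hgdef]
        simp only
        rw [Complex.exp_sub, hLe 0 h0mem _ hθ, hLe 0 h0mem _ h02mem, hGpole θ,
          div_self (hGne _)]
      have := exp_one_const h2pi hgc hge
      have hg0 : g 0 = 0 := by simp [hgdef]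
      rw [hddef]
      simp only
      calc L (0, 2*π) - L (0, 0) = g (2*π) := rfl
      _ = g 0 := this
      _ = 0 := hg0
    have := exp_one_const hpi2 hdc hde
    have : d (π/2) = 0 := by rw [this, hd0]
    rw [hddef] at this
    exact sub_eq_zero.mp this
  have hw0 : L0 (π/2, 2*π) = L0 (π/2, 0) :=
    wind L0 G0 hL0cont hL0e hG0ne (fun r => by rw [hG0def]; simp only; rw [hHper r])
      (fun θ => by rw [hG0def]; simp only; rw [hHpole θ])
  have hw1 : L1 (π/2, 2*π) = L1 (π/2, 0) :=
    wind L1 G1 hL1cont hL1e hG1ne (fun r => by rw [hG1def]; simp only; rw [hKmper r])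
      (fun θ => by rw [hG1def]; simp only; rw [hKmpole θ])
  -- the equator relation
  have hrel : ∀ θ : ℝ, G0 (π/2, θ) = Complex.exp (-(θ:ℂ) * Complex.I) * G1 (π/2, θ) := by
    intro θ
    set v : TwoSphere := H (π/2, θ) with hvdef
    have hv0 : (v.1 0 : ℂ) = 0 := by
      rw [hvdef]
      simp [hHdef, hcpi, Real.cos_pi_div_two]
    have hv1 : (v.1 1 : ℂ) = Complex.cos θ := by
      rw [hvdef]
      simp [hHdef, hcpi, Real.sin_pi_div_two, Complex.ofReal_cos]
    have hv2 : (v.1 2 : ℂ) = Complex.sin θ := by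
      rw [hvdef]
      simp [hHdef, hcpi, Real.sin_pi_div_two, Complex.ofReal_sin]
    have he := (ent v).1
    rw [hv0, hv1, hv2] at he
    have hexp : Complex.exp (-(θ:ℂ) * Complex.I)
        = Complex.cos θ - Complex.I * Complex.sin θ := by
      rw [Complex.exp_mul_I, Complex.cos_neg, Complex.sin_neg]
      ring
    have hg1 : G1 (π/2, θ) = s v 1 := by
      rw [hG1def]
      simp only
      rw [hequator θ, ← hvdef]
    have hg0 : G0 (π/2, θ) = s v 0 := rfl
    rw [hg0, hg1, hexp]
    linear_combination he
  -- the contradiction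
  set g : ℝ → ℂ := fun θ => L0 (π/2, θ) + (θ:ℂ) * Complex.I - L1 (π/2, θ) with hgdef
  have hgc : ContinuousOn g (Icc 0 (2*π)) := by
    apply ContinuousOn.sub
    apply ContinuousOn.add
    · exact hL0cont.comp (continuous_const.prodMk continuous_id).continuousOn
        (fun θ _ => ⟨hpimem, mem_univ _⟩)
    · exact (Complex.continuous_ofReal.mul continuous_const).continuousOn
    · exact hL1cont.comp (continuous_const.prodMk continuous_id).continuousOn
        (fun θ _ => ⟨hpimem, mem_univ _⟩)
  have hge : ∀ θ ∈ Icc (0:ℝ) (2*π), Complex.exp (g θ) = 1 := by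
    intro θ hθ
    rw [hgdef]
    simp only
    rw [Complex.exp_sub, Complex.exp_add, hL0e _ hpimem _ hθ, hL1e _ hpimem _ hθ, hrel θ]
    have hee : Complex.exp (-(θ:ℂ) * Complex.I) * Complex.exp ((θ:ℂ) * Complex.I) = 1 := by
      rw [← Complex.exp_add]
      simp
    rw [div_eq_one_iff_eq (hG1ne _)]
    linear_combination (G1 (π/2, θ)) * hee
  have hfinal := exp_one_const h2pi hgc hge
  rw [hgdef] at hfinal
  simp only at hfinal
  have hzero : ((2*π : ℝ) : ℂ) * Complex.I = 0 := by
    push_cast at hfinal ⊢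
    linear_combination hfinal - hw0 + hw1
  have h2ne : ((2*π : ℝ) : ℂ) ≠ 0 := Complex.ofReal_ne_zero.mpr (by positivity)
  exact (mul_ne_zero h2ne Complex.I_ne_zero) hzero

theorem stmt_6 :
    (∀ s : TwoSphere → Fin 2 → ℂ, Continuous s →
      (∀ v, bottProjection v *ᵥ s v = s v) → ∃ v, s v = 0) ∧
    ¬ (∃ w : TwoSphere → Matrix (Fin 2) (Fin 2) ℂ, Continuous w ∧
        (∀ v, (w v)ᴴ * w v = Matrix.single 0 0 1) ∧
        (∀ v, (bottProjection v - w v * (w v)ᴴ).PosSemidef)) := by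
  constructor
  · exact no_section
  · rintro ⟨w, hw, hiso, hpsd⟩
    set s : TwoSphere → Fin 2 → ℂ := fun v i => w v i 0 with hsdef
    have hscont : Continuous s :=
      continuous_pi fun i => (continuous_apply (0 : Fin 2)).comp
        ((continuous_apply i).comp hw)
    have hnorm : ∀ v, star (s v) ⬝ᵥ s v = 1 := by
      intro v
      have h := congrFun (congrFun (hiso v) 0) 0
      simp [Matrix.mul_apply, Matrix.conjTranspose_apply, Fin.sum_univ_two,
        Matrix.single_apply_same] at h
      simp [dotProduct, Fin.sum_univ_two, hsdef, Pi.star_apply]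
      linear_combination h
    have hcol : ∀ v (i : Fin 2), w v i 1 = 0 := by
      intro v i
      have h := congrFun (congrFun (hiso v) 1) 1
      simp [Matrix.mul_apply, Matrix.conjTranspose_apply, Fin.sum_univ_two,
        Matrix.single] at h
      have h' : Complex.normSq (w v 0 1) + Complex.normSq (w v 1 1) = 0 := by
        have hc : ((Complex.normSq (w v 0 1) + Complex.normSq (w v 1 1) : ℝ) : ℂ) = 0 := by
          push_cast
          rw [← Complex.mul_conj, ← Complex.mul_conj]
          linear_combination h
        exact_mod_cast hc
      have h0 : Complex.normSq (w v 0 1) = 0 := by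
        nlinarith [Complex.normSq_nonneg (w v 0 1), Complex.normSq_nonneg (w v 1 1)]
      have h1 : Complex.normSq (w v 1 1) = 0 := by
        nlinarith [Complex.normSq_nonneg (w v 0 1), Complex.normSq_nonneg (w v 1 1)]
      fin_cases i
      · exact Complex.normSq_eq_zero.mp h0
      · exact Complex.normSq_eq_zero.mp h1
    have hherm : ∀ v, (bottProjection v)ᴴ = bottProjection v := by
      intro v
      ext i j
      fin_cases i <;> fin_cases j <;>
        simp [bottProjection, Matrix.conjTranspose_apply, Complex.conj_ofReal,
          map_add, map_sub, _root_.map_mul, Complex.conj_I] <;> try ring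
    have hsq : ∀ v : TwoSphere, ((v.1 0 : ℂ))^2 + ((v.1 1 : ℂ))^2 + ((v.1 2 : ℂ))^2 = 1 := by
      intro v
      exact_mod_cast congrArg (fun t : ℝ => (t : ℂ)) v.2
    have hidem : ∀ v, bottProjection v * bottProjection v = bottProjection v := by
      intro v
      have hx := hsq v
      ext i j
      fin_cases i <;> fin_cases j
      · simp [bottProjection, Matrix.mul_apply, Fin.sum_univ_two]
        linear_combination (4:ℂ)⁻¹ * hx - (((v.1 2 : ℂ))^2/4) * Complex.I_sq
      · simp [bottProjection, Matrix.mul_apply, Fin.sum_univ_two]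
        ring
      · simp [bottProjection, Matrix.mul_apply, Fin.sum_univ_two]
        ring
      · simp [bottProjection, Matrix.mul_apply, Fin.sum_univ_two]
        linear_combination (4:ℂ)⁻¹ * hx - (((v.1 2 : ℂ))^2/4) * Complex.I_sq
    have key : ∀ v, bottProjection v *ᵥ s v = s v := by
      intro v
      set p := bottProjection v with hpdef
      set x := s v with hxdef
      set cc : ℂ := star x ⬝ᵥ (p *ᵥ x) with hccdef
      have hA : star x ⬝ᵥ ((w v * (w v)ᴴ) *ᵥ x) = 1 := by
        have : star x ⬝ᵥ ((w v * (w v)ᴴ) *ᵥ x) = (star x ⬝ᵥ x) * (star x ⬝ᵥ x) := by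
          simp [Matrix.mulVec, dotProduct, Matrix.mul_apply,
            Matrix.conjTranspose_apply, Fin.sum_univ_two, hcol, hxdef, hsdef,
            Pi.star_apply]
          ring
        rw [this, hnorm v, mul_one]
      have hq := (hpsd v).dotProduct_mulVec_nonneg x
      rw [Matrix.sub_mulVec, dotProduct_sub, hA, ← hccdef] at hq
      have hc1 : 1 ≤ cc := sub_nonneg.mp hq
      set u : Fin 2 → ℂ := x - p *ᵥ x with hudef
      have hps : star (p *ᵥ x) ⬝ᵥ x = cc := by
        rw [Matrix.star_mulVec, hherm v, ← dotProduct_mulVec, ← hccdef]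
      have hpp : star (p *ᵥ x) ⬝ᵥ (p *ᵥ x) = cc := by
        rw [Matrix.star_mulVec, hherm v, ← dotProduct_mulVec,
          Matrix.mulVec_mulVec, hidem v, ← hccdef]
      have e1 : star u ⬝ᵥ u = 1 - cc := by
        rw [hudef, star_sub, sub_dotProduct, dotProduct_sub,
          dotProduct_sub, hps, hpp, ← hccdef, hnorm v]
        ring
      have e2 : (0:ℂ) ≤ star u ⬝ᵥ u := dotProduct_star_self_nonneg u
      have hcle : cc ≤ 1 := by
        rw [e1] at e2
        exact sub_nonneg.mp e2
      have hceq : cc = 1 := le_antisymm hcle hc1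
      have e3 : star u ⬝ᵥ u = 0 := by rw [e1, hceq]; ring
      have hu0 : u = 0 := dotProduct_star_self_eq_zero.mp e3
      have hux : x - p *ᵥ x = 0 := by rw [← hudef]; exact hu0
      exact (sub_eq_zero.mp hux).symm
    obtain ⟨v, hv⟩ := no_section s hscont key
    have := hnorm v
    rw [hv] at this
    simp [dotProduct] at this
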